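/- arXiv:1710.07658 — 3 statements merged into one kernel-verified Lean document; each statement's English description precedes it below -/
import Mathlib

section
/- Suppose P(t) ∈ ℤ[t] is a monic polynomial all of whose roots lie on the unit circle in ℂ, and P is not constant. Then P is a product of cyclotomic polynomials (Kronecker's theorem). -/
open Polynomial IntermediateField

/-- Every complex root of a monic integer polynomial whose roots all lie on the
unit circle is a root of unity (Kronecker's lemma). -/
lemma kronecker_root_of_unity (P : Polynomial ℤ) (hm : P.Monic)
    (hroots : ∀ z : ℂ, (P.map (Int.castRingHom ℂ)).IsRoot z → ‖z‖ = 1)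
    (z : ℂ) (hz : (P.map (Int.castRingHom ℂ)).IsRoot z) :
    ∃ n : ℕ, 0 < n ∧ z ^ n = 1 := by
  have hez : Polynomial.eval₂ (Int.castRingHom ℂ) z P = 0 := by
    rwa [← Polynomial.eval_map]
  have hint : IsIntegral ℤ z := ⟨P, hm, hez⟩
  have hintQ : IsIntegral ℚ z := hint.tower_top
  let K : IntermediateField ℚ ℂ := ℚ⟮z⟯
  haveI : FiniteDimensional ℚ K := IntermediateField.adjoin.finiteDimensional hintQ
  haveI : NumberField K := ⟨⟩
  set x : K := IntermediateField.AdjoinSimple.gen ℚ z with hxdef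
  have hxz : (algebraMap K ℂ) x = z := rfl
  have hcast : ∀ (f : ℤ →+* ℂ), f = Int.castRingHom ℂ := fun f => by
    exact Subsingleton.elim _ _
  have hxev : Polynomial.eval₂ (algebraMap ℤ K) x P = 0 := by
    have hinj : Function.Injective (algebraMap K ℂ) := (algebraMap K ℂ).injective
    apply hinj
    rw [Polynomial.hom_eval₂, map_zero, hxz, hcast ((algebraMap K ℂ).comp (algebraMap ℤ K))]
    exact hez
  have hxi : IsIntegral ℤ x := ⟨P, hm, hxev⟩
  have hx : ∀ φ : K →+* ℂ, ‖φ x‖ = 1 := by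
    intro φ
    have : Polynomial.eval₂ (Int.castRingHom ℂ) (φ x) P = 0 := by
      rw [← hcast (φ.comp (algebraMap ℤ K)), ← Polynomial.hom_eval₂, hxev, map_zero]
    have hr : (P.map (Int.castRingHom ℂ)).IsRoot (φ x) := by
      rwa [Polynomial.IsRoot, Polynomial.eval_map]
    exact hroots _ hr
  obtain ⟨n, hn, hxn⟩ := NumberField.Embeddings.pow_eq_one_of_norm_eq_one K ℂ hxi hx
  refine ⟨n, hn, ?_⟩
  have := congrArg (algebraMap K ℂ) hxn
  rwa [map_pow, map_one, hxz] at this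

lemma kronecker_aux : ∀ (n : ℕ) (P : Polynomial ℤ), P.natDegree ≤ n → P.Monic →
    (∀ z : ℂ, (P.map (Int.castRingHom ℂ)).IsRoot z → ‖z‖ = 1) →
    ∃ s : Multiset ℕ, (∀ d ∈ s, 0 < d) ∧
      P = (s.map (fun d => Polynomial.cyclotomic d ℤ)).prod := by
  intro n
  induction n with
  | zero =>
    intro P hdeg hm _
    have h1 : P = 1 := hm.natDegree_eq_zero.mp (Nat.le_zero.mp hdeg)
    exact ⟨0, by simp, by simp [h1]⟩
  | succ n ih =>
    intro P hdeg hm hroots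
    by_cases h0 : P.natDegree = 0
    · have h1 : P = 1 := hm.natDegree_eq_zero.mp h0
      exact ⟨0, by simp, by simp [h1]⟩
    · -- P has a complex root
      have hmap : (P.map (Int.castRingHom ℂ)).natDegree = P.natDegree :=
        hm.natDegree_map _
      have hdpos : 0 < (P.map (Int.castRingHom ℂ)).degree := by
        apply Polynomial.natDegree_pos_iff_degree_pos.mp
        rw [hmap]
        exact Nat.pos_of_ne_zero h0
      obtain ⟨z, hz⟩ := Complex.exists_root hdpos
      obtain ⟨m, hm', hzm⟩ := kronecker_root_of_unity P hm hroots z hz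
      have hfin : IsOfFinOrder z := isOfFinOrder_iff_pow_eq_one.mpr ⟨m, hm', hzm⟩
      set d : ℕ := orderOf z with hddef
      have hdpos' : 0 < d := hfin.orderOf_pos
      have hprim : IsPrimitiveRoot z d := IsPrimitiveRoot.orderOf z
      -- cyclotomic d divides P
      have haev : Polynomial.aeval z (P.map (Int.castRingHom ℚ)) = 0 := by
        rw [Polynomial.aeval_def, Polynomial.eval₂_map,
          show (algebraMap ℚ ℂ).comp (Int.castRingHom ℚ) = Int.castRingHom ℂ from
            Subsingleton.elim _ _]
        rwa [← Polynomial.eval_map]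
      have hdvdQ : Polynomial.cyclotomic d ℚ ∣ P.map (Int.castRingHom ℚ) := by
        rw [Polynomial.cyclotomic_eq_minpoly_rat hprim hdpos']
        exact minpoly.dvd ℚ z haev
      have hdvd : Polynomial.cyclotomic d ℤ ∣ P := by
        have := hdvdQ
        rw [← Polynomial.map_cyclotomic_int d ℚ] at this
        exact (Polynomial.map_dvd_map (Int.castRingHom ℚ) Int.cast_injective
          (Polynomial.cyclotomic.monic d ℤ)).mp this
      obtain ⟨Q, hPQ⟩ := hdvd
      have hQm : Q.Monic :=
        (Polynomial.cyclotomic.monic d ℤ).of_mul_monic_left (hPQ ▸ hm)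
      have hndeg : P.natDegree = d.totient + Q.natDegree := by
        rw [hPQ, (Polynomial.cyclotomic.monic d ℤ).natDegree_mul hQm,
          Polynomial.natDegree_cyclotomic]
      have htot : 0 < d.totient := Nat.totient_pos.mpr hdpos'
      have hQdeg : Q.natDegree ≤ n := by omega
      have hQroots : ∀ w : ℂ, (Q.map (Int.castRingHom ℂ)).IsRoot w → ‖w‖ = 1 := by
        intro w hw
        apply hroots
        rw [Polynomial.IsRoot, hPQ, Polynomial.map_mul, Polynomial.eval_mul, hw, mul_zero]
      obtain ⟨s, hs, hsprod⟩ := ih Q hQdeg hQm hQroots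
      refine ⟨d ::ₘ s, ?_, ?_⟩
      · intro e he
        rcases Multiset.mem_cons.mp he with rfl | he'
        · exact hdpos'
        · exact hs e he'
      · rw [Multiset.map_cons, Multiset.prod_cons, ← hsprod, ← hPQ]

/-- Kronecker's theorem: a non-constant monic integer polynomial all of whose
complex roots lie on the unit circle is a product of cyclotomic polynomials. -/
theorem stmt3 (P : Polynomial ℤ) (hm : P.Monic) (hd : 0 < P.natDegree)
    (hroots : ∀ z : ℂ, (P.map (Int.castRingHom ℂ)).IsRoot z → ‖z‖ = 1) :
    ∃ s : Multiset ℕ, (∀ d ∈ s, 0 < d) ∧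
      P = (s.map (fun d => Polynomial.cyclotomic d ℤ)).prod := by
  exact kronecker_aux P.natDegree P le_rfl hm hroots
end

section
/- Let i, j ≥ 0 with i + j > 0 and consider the polynomial P(t) = Φ_6(t)^i · Φ_10(t)^j, where Φ_6(t) = t^2 - t + 1 and Φ_10(t) = t^4 - t^3 + t^2 - t + 1. If all nonzero coefficients of P are ±1, then i + j = 1. -/
open Polynomial

lemma aux_cyclo6 : cyclotomic 6 ℤ = X ^ 2 - X + 1 := by
  have h := cyclotomic_expand_eq_cyclotomic_mul Nat.prime_two (by norm_num : ¬ (2:ℕ) ∣ 3) ℤ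
  rw [show (3 * 2 : ℕ) = 6 from rfl, cyclotomic_three] at h
  apply mul_right_cancel₀ (cyclotomic_ne_zero 3 ℤ)
  rw [cyclotomic_three, ← h]
  simp only [map_add, map_pow, map_one, expand_X]
  ring

lemma aux_cyclo5 : cyclotomic 5 ℤ = X ^ 4 + X ^ 3 + X ^ 2 + X + 1 := by
  haveI : Fact (Nat.Prime 5) := ⟨by norm_num⟩
  rw [cyclotomic_prime]
  simp [Finset.sum_range_succ]
  ring

lemma aux_cyclo10 : cyclotomic 10 ℤ = X ^ 4 - X ^ 3 + X ^ 2 - X + 1 := by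
  have h := cyclotomic_expand_eq_cyclotomic_mul Nat.prime_two (by norm_num : ¬ (2:ℕ) ∣ 5) ℤ
  rw [show (5 * 2 : ℕ) = 10 from rfl, aux_cyclo5] at h
  apply mul_right_cancel₀ (cyclotomic_ne_zero 5 ℤ)
  rw [aux_cyclo5, ← h]
  simp only [map_add, map_pow, map_one, expand_X]
  ring

lemma coeff_one_mul' (p q : ℤ[X]) :
    (p * q).coeff 1 = p.coeff 0 * q.coeff 1 + p.coeff 1 * q.coeff 0 := by
  rw [coeff_mul, Finset.Nat.sum_antidiagonal_eq_sum_range_succ_mk]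
  simp [Finset.sum_range_succ]

lemma aux_pow (p : ℤ[X]) (h0 : p.coeff 0 = 1) (h1 : p.coeff 1 = -1) (n : ℕ) :
    (p ^ n).coeff 0 = 1 ∧ (p ^ n).coeff 1 = -n := by
  induction n with
  | zero => simp [coeff_one]
  | succ n ih =>
    rw [pow_succ]
    constructor
    · rw [mul_coeff_zero, ih.1, h0, one_mul]
    · rw [coeff_one_mul', ih.1, ih.2, h0, h1]
      push_cast
      ring

/-- If `i + j > 0` and all nonzero coefficients of `Φ₆(t)^i * Φ₁₀(t)^j` are `±1`,
then `i + j = 1`. -/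
theorem stmt4 (i j : ℕ) (hij : 0 < i + j)
    (h : ∀ n : ℕ,
      ((Polynomial.cyclotomic 6 ℤ) ^ i * (Polynomial.cyclotomic 10 ℤ) ^ j).coeff n
        ∈ ({-1, 0, 1} : Set ℤ)) :
    i + j = 1 := by
  have h6 : (cyclotomic 6 ℤ).coeff 0 = 1 ∧ (cyclotomic 6 ℤ).coeff 1 = -1 := by
    rw [aux_cyclo6]; constructor <;> simp [coeff_one, coeff_X]
  have h10 : (cyclotomic 10 ℤ).coeff 0 = 1 ∧ (cyclotomic 10 ℤ).coeff 1 = -1 := by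
    rw [aux_cyclo10]; constructor <;> simp [coeff_one, coeff_X]
  have hi := aux_pow _ h6.1 h6.2 i
  have hj := aux_pow _ h10.1 h10.2 j
  have hc : ((cyclotomic 6 ℤ) ^ i * (cyclotomic 10 ℤ) ^ j).coeff 1 = -(i + j : ℤ) := by
    rw [coeff_one_mul', hi.1, hi.2, hj.1, hj.2]; ring
  have := h 1
  rw [hc] at this
  simp only [Set.mem_insert_iff, Set.mem_singleton_iff] at this
  omega
end

section
/- Let k ≥ 1 and m ≥ 3 be integers, and define G(θ) = k·cos((2m+1)θ/2) - (k-1)·cos((2m-1)θ/2). Then G has a root θ in the open interval (2π/3, π). -/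
/-- Auxiliary function for `stmt8`. -/
noncomputable def stmt8G (k : ℕ) (M θ : ℝ) : ℝ :=
  (k : ℝ) * Real.cos ((2*M + 1) * θ / 2) - ((k : ℝ) - 1) * Real.cos ((2*M - 1) * θ / 2)

/-- For integers `k ≥ 1` and `m ≥ 3`, the function
`G(θ) = k·cos((2m+1)θ/2) - (k-1)·cos((2m-1)θ/2)` has a root in `(2π/3, π)`. -/
theorem stmt8 (k m : ℕ) (hk : 1 ≤ k) (hm : 3 ≤ m) :
    ∃ θ ∈ Set.Ioo (2 * Real.pi / 3) Real.pi,
      (k : ℝ) * Real.cos ((2 * (m : ℝ) + 1) * θ / 2) -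
        ((k : ℝ) - 1) * Real.cos ((2 * (m : ℝ) - 1) * θ / 2) = 0 := by
  have hπ := Real.pi_pos
  set M : ℝ := (m : ℝ) with hM
  have hM3 : (3:ℝ) ≤ M := by rw [hM]; exact_mod_cast hm
  have hden : 2*M+1 ≠ 0 := by nlinarith
  have hk1 : (1:ℝ) ≤ (k:ℝ) := by exact_mod_cast hk
  have hGdef : ∀ θ : ℝ, stmt8G k M θ =
      (k : ℝ) * Real.cos ((2*M + 1) * θ / 2) - ((k : ℝ) - 1) * Real.cos ((2*M - 1) * θ / 2) :=
    fun θ => rfl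
  have hcont : Continuous (stmt8G k M) := by unfold stmt8G; fun_prop
  have hpos : ∀ x : ℝ, (1:ℝ) ≤ (k:ℝ) - ((k:ℝ)-1) * Real.cos x := by
    intro x
    nlinarith [Real.cos_le_one x, Real.neg_one_le_cos x]
  have key : ∀ j : ℕ, stmt8G k M (2*Real.pi*j/(2*M+1)) =
      (-1)^j * ((k:ℝ) - ((k:ℝ)-1) * Real.cos (2*Real.pi*j/(2*M+1))) := by
    intro j
    have e1 : (2*M+1) * (2*Real.pi*j/(2*M+1)) / 2 = (j:ℝ)*Real.pi - 0 := by
      field_simp; ring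
    have e2 : (2*M-1) * (2*Real.pi*j/(2*M+1)) / 2
        = (j:ℝ)*Real.pi - 2*Real.pi*j/(2*M+1) := by
      field_simp; ring
    rw [hGdef]
    simp only [e1, e2, Real.cos_nat_mul_pi_sub, Real.cos_zero]
    ring
  -- right point b = 2πm/(2m+1)
  set b : ℝ := 2*Real.pi*m/(2*M+1) with hb
  have hbπ : b < Real.pi := by
    rw [hb, div_lt_iff₀ (by nlinarith)]
    nlinarith
  have hGb : 0 < (-1)^m * stmt8G k M b := by
    rw [hb, key m]
    have := hpos (2*Real.pi*m/(2*M+1))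
    rcases Nat.even_or_odd m with h | h
    · rw [h.neg_one_pow]; nlinarith
    · rw [h.neg_one_pow]; nlinarith
  -- left point a
  obtain ⟨a, ha1, ha2, hGa⟩ : ∃ a, 2*Real.pi/3 ≤ a ∧ a < b ∧ 0 < (-1)^(m+1) * stmt8G k M a := by
    rcases eq_or_lt_of_le hm with hm3 | hm4
    · -- m = 3 : a = 2π/3
      refine ⟨2*Real.pi/3, le_refl _, ?_, ?_⟩
      · rw [hb, lt_div_iff₀ (by nlinarith)]
        have : M = 3 := by rw [hM, ← hm3]; norm_num
        rw [this]; push_cast [← hm3]; nlinarith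
      · have hMe : M = 3 := by rw [hM, ← hm3]; norm_num
        have c1 : Real.cos ((2*M+1) * (2*Real.pi/3) / 2) = 1/2 := by
          rw [hMe, show (2*(3:ℝ)+1) * (2*Real.pi/3) / 2 = Real.pi/3 + 2*Real.pi by ring,
            Real.cos_add_two_pi, Real.cos_pi_div_three]
        have c2 : Real.cos ((2*M-1) * (2*Real.pi/3) / 2) = 1/2 := by
          rw [hMe, show (2*(3:ℝ)-1) * (2*Real.pi/3) / 2 = -(Real.pi/3) + 2*Real.pi by ring,
            Real.cos_add_two_pi, Real.cos_neg, Real.cos_pi_div_three]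
        rw [hGdef]
        simp only [c1, c2, ← hm3]
        norm_num
    · -- m ≥ 4 : a = 2π(m-1)/(2m+1)
      have hm1 : 1 ≤ m := by omega
      have hcast : ((m - 1 : ℕ) : ℝ) = M - 1 := by
        rw [hM]; push_cast [Nat.cast_sub hm1]; ring
      have hM4 : (4:ℝ) ≤ M := by rw [hM]; exact_mod_cast hm4
      refine ⟨2*Real.pi*(M-1)/(2*M+1), ?_, ?_, ?_⟩
      · rw [div_le_div_iff₀ (by norm_num) (by nlinarith)]; nlinarith
      · rw [hb, div_lt_div_iff₀ (by nlinarith) (by nlinarith)]; nlinarith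
      · have hk' := key (m - 1)
        rw [hcast] at hk'
        rw [hk']
        have := hpos (2*Real.pi*(M-1)/(2*M+1))
        have hpow : (-1:ℝ)^(m+1) * (-1)^(m-1) = 1 := by
          rw [← pow_add]
          exact Even.neg_one_pow ⟨m, by omega⟩
        rcases Nat.even_or_odd (m-1) with h | h
        · have h' : Even (m+1) := by
            rcases h with ⟨t, ht⟩; exact ⟨t+1, by omega⟩
          rw [h.neg_one_pow, h'.neg_one_pow]; nlinarith
        · have h' : Odd (m+1) := by
            rcases h with ⟨t, ht⟩; exact ⟨t+1, by omega⟩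
          rw [h.neg_one_pow, h'.neg_one_pow]; nlinarith
  -- IVT
  have hab : a ≤ b := le_of_lt ha2
  have hsub : Set.Ioo a b ⊆ Set.Ioo (2*Real.pi/3) Real.pi := by
    intro x hx
    exact ⟨lt_of_le_of_lt ha1 hx.1, lt_trans hx.2 hbπ⟩
  obtain ⟨θ, hθmem, hθ⟩ : ∃ θ ∈ Set.Ioo a b, stmt8G k M θ = 0 := by
    rcases Nat.even_or_odd m with h | h
    · -- m even : stmt8G k M a < 0 < stmt8G k M b
      have h' : Odd (m+1) := Even.add_one h
      rw [h'.neg_one_pow] at hGa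
      rw [h.neg_one_pow] at hGb
      have ivt : Set.Ioo (stmt8G k M a) (stmt8G k M b) ⊆ stmt8G k M '' Set.Ioo a b :=
        intermediate_value_Ioo hab hcont.continuousOn
      obtain ⟨θ, hθ1, hθ2⟩ := ivt (show (0:ℝ) ∈ Set.Ioo (stmt8G k M a) (stmt8G k M b) from ⟨by linarith, by linarith⟩)
      exact ⟨θ, hθ1, hθ2⟩
    · -- m odd : stmt8G k M b < 0 < stmt8G k M a
      have h' : Even (m+1) := Odd.add_one h
      rw [h'.neg_one_pow] at hGa
      rw [h.neg_one_pow] at hGb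
      have ivt : Set.Ioo (stmt8G k M b) (stmt8G k M a) ⊆ stmt8G k M '' Set.Ioo a b :=
        intermediate_value_Ioo' hab hcont.continuousOn
      obtain ⟨θ, hθ1, hθ2⟩ := ivt (show (0:ℝ) ∈ Set.Ioo (stmt8G k M b) (stmt8G k M a) from ⟨by linarith, by linarith⟩)
      exact ⟨θ, hθ1, hθ2⟩
  exact ⟨θ, hsub hθmem, by rw [← hGdef θ]; exact hθ⟩
end
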